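/- Let w = s_{i_1}⋯s_{i_r} be reduced, fix s, and for t ≤ (number of occurrences of s) let w_{s,t} be the prefix of the reduced word ending at the t-th occurrence of s. Then β_{s,1} + ⋯ + β_{s,t} = Λ_s − w_{s,t}(Λ_s). -/

import Mathlib

open scoped RealInnerProductSpace

noncomputable section

/-- Data of a finite root system in a real inner product space, with a chosen
set of positive roots, simple roots and reflections. -/
structure RootSystemData (V : Type*) [NormedAddCommGroup V] [InnerProductSpace ℝ V] where
  /-- number of simple roots -/
  n : ℕ
  /-- the set of all roots -/
  Δ : Set V
  finite : Δ.Finite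
  /-- the set of positive roots -/
  pos : Set V
  pos_subset : pos ⊆ Δ
  /-- the simple roots -/
  simple : Fin n → V
  simple_pos : ∀ i, simple i ∈ pos
  root_ne_zero : ∀ α ∈ Δ, α ≠ 0
  neg_mem : ∀ α ∈ Δ, -α ∈ Δ
  pos_iff : ∀ α ∈ Δ, (α ∈ pos ↔ ¬ (-α ∈ pos))
  /-- the reflection in a root -/
  refl : V → (V ≃ₗ[ℝ] V)
  refl_apply : ∀ α, α ≠ 0 → ∀ x, refl α x = x - (2 * ⟪x, α⟫ / ⟪α, α⟫) • α
  refl_root : ∀ α ∈ Δ, ∀ β ∈ Δ, refl α β ∈ Δ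
  simple_refl_pos : ∀ i, ∀ β ∈ pos, β ≠ simple i → refl (simple i) β ∈ pos
  simple_indep : LinearIndependent ℝ simple
  pos_combo : ∀ α ∈ pos, ∃ c : Fin n → ℝ, (∀ i, 0 ≤ c i) ∧ α = ∑ i, c i • simple i

namespace RootSystemData

variable {V : Type*} [NormedAddCommGroup V] [InnerProductSpace ℝ V] (R : RootSystemData V)

/-- The Weyl group, as the subgroup of linear automorphisms generated by the
simple reflections. -/
def weylGroup : Subgroup (V ≃ₗ[ℝ] V) :=
  Subgroup.closure (Set.range fun i => R.refl (R.simple i))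

/-- The length of a Weyl group element: the least length of an expression as a
product of simple reflections. -/
def len (w : V ≃ₗ[ℝ] V) : ℕ :=
  sInf {r | ∃ f : Fin r → Fin R.n,
    w = (List.ofFn fun k => R.refl (R.simple (f k))).prod}

/-- `Φ_w = w(Δ⁻) ∩ Δ⁺`, i.e. the positive roots sent by `w⁻¹` to negative roots. -/
def Phi (w : V ≃ₗ[ℝ] V) : Set V :=
  {α | α ∈ R.pos ∧ w⁻¹ α ∈ R.Δ ∧ w⁻¹ α ∉ R.pos}

/-- A subset `S` of the positive roots is saturated if `α, β ∈ S` and `α + β` a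
root imply `α + β ∈ S`. -/
def Saturated (S : Set V) : Prop :=
  ∀ α ∈ S, ∀ β ∈ S, α + β ∈ R.Δ → α + β ∈ S

end RootSystemData

/-- For a reduced word `w = s_{i_1} ⋯ s_{i_r}`, a simple root index
`s`, and a position `m` at which `s` occurs, the sum of the roots
`β_k = s_{i_1} ⋯ s_{i_{k-1}}(α_{i_k})` over the positions `k ≤ m` with letter
`s` equals `Λ_s − w_{s,t}(Λ_s)`, where `w_{s,t} = s_{i_1} ⋯ s_{i_m}` is the
prefix ending at the `t`-th occurrence `m` of `s`. -/
theorem sum_beta_occurrences_prefix {V : Type*} [NormedAddCommGroup V] [InnerProductSpace ℝ V]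
    (R : RootSystemData V) (r : ℕ) (f : Fin r → Fin R.n) (w : V ≃ₗ[ℝ] V)
    (hw : w = (List.ofFn fun k => R.refl (R.simple (f k))).prod)
    (hred : R.len w = r)
    (β : Fin r → V)
    (hβ : ∀ k : Fin r, β k =
      (List.ofFn fun j : Fin k.1 => R.refl (R.simple (f ⟨j.1, j.2.trans k.2⟩))).prod
        (R.simple (f k)))
    (Λ : Fin R.n → V)
    (hΛ : ∀ i j, 2 * ⟪Λ i, R.simple j⟫ =
      (if i = j then ⟪R.simple j, R.simple j⟫ else 0))
    (s : Fin R.n) (m : Fin r) (hm : f m = s) :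
    ∑ k ∈ Finset.univ.filter (fun k => k ≤ m ∧ f k = s), β k =
      Λ s -
        ((List.ofFn fun j : Fin (m.1 + 1) =>
            R.refl (R.simple (f ⟨j.1, lt_of_lt_of_le j.2 m.2⟩))).prod) (Λ s) := by
  have hsimp_ne : ∀ i : Fin R.n, R.simple i ≠ 0 := fun i =>
    R.root_ne_zero _ (R.pos_subset (R.simple_pos i))
  have hrefl : ∀ i : Fin R.n,
      R.refl (R.simple i) (Λ s) = Λ s - (if s = i then (1:ℝ) else 0) • R.simple i := by
    intro i
    rw [R.refl_apply _ (hsimp_ne i), hΛ s i]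
    congr 1
    have h0 : ⟪R.simple i, R.simple i⟫ ≠ (0:ℝ) :=
      inner_self_ne_zero.mpr (hsimp_ne i)
    by_cases h : s = i
    · simp only [h, ↓reduceIte, div_self h0]
    · simp [h]
  have key : ∀ p : ℕ, ∀ hp : p ≤ r,
      Λ s - (List.ofFn fun j : Fin p =>
          R.refl (R.simple (f ⟨j.1, lt_of_lt_of_le j.2 hp⟩))).prod (Λ s)
        = ∑ k ∈ Finset.univ.filter (fun k : Fin r => k.1 < p ∧ f k = s), β k := by
    intro p
    induction p with
    | zero =>
      intro hp
      simp
    | succ p ih =>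
      intro hp
      have hp' : p < r := hp
      have hple : p ≤ r := le_of_lt hp'
      have hlist : (List.ofFn fun j : Fin (p+1) =>
            R.refl (R.simple (f ⟨j.1, lt_of_lt_of_le j.2 hp⟩)))
          = (List.ofFn fun j : Fin p =>
              R.refl (R.simple (f ⟨j.1, lt_of_lt_of_le j.2 hple⟩)))
            ++ [R.refl (R.simple (f ⟨p, hp'⟩))] := by
        rw [List.ofFn_succ', List.concat_eq_append]; rfl
      rw [hlist, List.prod_append, List.prod_singleton]
      set A := (List.ofFn fun j : Fin p =>
          R.refl (R.simple (f ⟨j.1, lt_of_lt_of_le j.2 hple⟩))).prod with hA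
      have happ : (A * R.refl (R.simple (f ⟨p, hp'⟩))) (Λ s)
          = A (R.refl (R.simple (f ⟨p, hp'⟩)) (Λ s)) := rfl
      rw [happ, hrefl, map_sub, map_smul]
      have hAβ : A (R.simple (f ⟨p, hp'⟩)) = β ⟨p, hp'⟩ := (hβ ⟨p, hp'⟩).symm
      rw [hAβ]
      by_cases hfp : f ⟨p, hp'⟩ = s
      · have hfil : Finset.univ.filter (fun k : Fin r => k.1 < p + 1 ∧ f k = s)
            = insert ⟨p, hp'⟩ (Finset.univ.filter (fun k : Fin r => k.1 < p ∧ f k = s)) := by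
          ext k
          simp only [Finset.mem_filter, Finset.mem_insert, Finset.mem_univ, true_and,
            Nat.lt_succ_iff_lt_or_eq]
          constructor
          · rintro ⟨h1 | h1, h2⟩
            · exact Or.inr ⟨h1, h2⟩
            · exact Or.inl (Fin.ext h1)
          · rintro (h | ⟨h1, h2⟩)
            · subst h; exact ⟨Or.inr rfl, hfp⟩
            · exact ⟨Or.inl h1, h2⟩
        rw [hfil, Finset.sum_insert (by simp), ← ih hple]
        simp [if_pos hfp.symm]
        abel
      · have hfil : Finset.univ.filter (fun k : Fin r => k.1 < p + 1 ∧ f k = s)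
            = Finset.univ.filter (fun k : Fin r => k.1 < p ∧ f k = s) := by
          ext k
          simp only [Finset.mem_filter, Finset.mem_univ, true_and, Nat.lt_succ_iff_lt_or_eq]
          constructor
          · rintro ⟨h1 | h1, h2⟩
            · exact ⟨h1, h2⟩
            · exact absurd h2 (by rw [show k = ⟨p, hp'⟩ from Fin.ext h1]; exact hfp)
          · rintro ⟨h1, h2⟩; exact ⟨Or.inl h1, h2⟩
        rw [hfil, ← ih hple]
        have : ¬ s = f ⟨p, hp'⟩ := fun h => hfp h.symm
        simp [if_neg this]
        rfl
  have := key (m.1 + 1) m.2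
  rw [this]
  congr 1
  ext k
  simp only [Finset.mem_filter, Fin.le_def, Nat.lt_succ_iff]
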